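/- In the I-GMANOVA setup with partition sizes (t, r, q), q = N − t − r, let R̂₀ = K⁻¹(S_c + S_c^{1/2} P_{A₀}^⊥ Z_{W1} P_{C†} Z_{W1}† P_{A₀}^⊥ S_c^{1/2}), which is Hermitian positive definite, let V_{c,1} = [I_M; 0_{(K−M)×M}] ∈ ℂ^{K×M}, Z_c = Z V_{c,1} with row blocks Z₁ ∈ ℂ^{t×M}, Z₂ ∈ ℂ^{r×M}, Z₃ ∈ ℂ^{q×M}, Z₂₃ = [Z₂; Z₃], and let S₂ ∈ ℂ^{(r+q)×(r+q)} be the lower-right (r+q)×(r+q) block of S_c. With Z_{W0} = R̂₀^{-1/2}Z and Ā₀ = R̂₀^{-1/2}E_t, one has (Z_{W0} V_{c,1})† P_{Ā₀}^⊥ (Z_{W0} V_{c,1}) = K · ( X − X (I_M + X)⁻¹ X ), where X = Z₂₃† S₂⁻¹ Z₂₃. -/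

import Mathlib

open Matrix
open scoped ComplexOrder

noncomputable section

/-- Orthogonal projector onto the column space of `F`: `P_F = F (Fᴴ F)⁻¹ Fᴴ`. -/
def proj {n m : Type*} [Fintype n] [Fintype m] [DecidableEq n] [DecidableEq m]
    (F : Matrix n m ℂ) : Matrix n n ℂ :=
  F * (Fᴴ * F)⁻¹ * Fᴴ

/-- Complementary projector `P_F^⊥ = I - P_F`. -/
def projPerp {n m : Type*} [Fintype n] [Fintype m] [DecidableEq n] [DecidableEq m]
    (F : Matrix n m ℂ) : Matrix n n ℂ :=
  1 - proj F

/-- The square root of a positive semidefinite matrix, as defined in the older Mathlib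
(removed since then). -/
def Matrix.PosSemidef.sqrt {n 𝕜 : Type*} [Fintype n] [RCLike 𝕜] [DecidableEq n]
    {A : Matrix n n 𝕜} (hA : A.PosSemidef) : Matrix n n 𝕜 :=
  (hA.1.eigenvectorUnitary : Matrix n n 𝕜) * diagonal ((↑) ∘ (√·) ∘ hA.1.eigenvalues) *
    (star (hA.1.eigenvectorUnitary : Matrix n n 𝕜))

lemma Matrix.PosSemidef.posSemidef_sqrt {n 𝕜 : Type*} [Fintype n] [RCLike 𝕜] [DecidableEq n]
    {A : Matrix n n 𝕜} (hA : A.PosSemidef) : hA.sqrt.PosSemidef := by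
  unfold Matrix.PosSemidef.sqrt
  have h := (posSemidef_diagonal_iff (d := ((↑) ∘ (√·) ∘ hA.1.eigenvalues : n → 𝕜))).mpr
    (fun i => by simp [RCLike.ofReal_nonneg, Real.sqrt_nonneg])
  simpa [Matrix.star_eq_conjTranspose] using h.mul_mul_conjTranspose_same
    (hA.1.eigenvectorUnitary : Matrix n n 𝕜)

lemma Matrix.PosSemidef.sqrt_mul_self {n 𝕜 : Type*} [Fintype n] [RCLike 𝕜] [DecidableEq n]
    {A : Matrix n n 𝕜} (hA : A.PosSemidef) : hA.sqrt * hA.sqrt = A := by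
  let C : Matrix n n 𝕜 := hA.1.eigenvectorUnitary
  let E := diagonal ((↑) ∘ Real.sqrt ∘ hA.1.eigenvalues : n → 𝕜)
  suffices C * (E * (star C * C) * E) * star C = A by
    rw [Matrix.PosSemidef.sqrt]
    simpa only [← mul_assoc] using this
  have : E * E = diagonal ((↑) ∘ hA.1.eigenvalues) := by
    rw [diagonal_mul_diagonal]
    congr! with v
    simp [← pow_two, ← RCLike.ofReal_pow, Real.sq_sqrt (hA.eigenvalues_nonneg v)]
  have hs := hA.1.spectral_theorem
  rw [Unitary.conjStarAlgAut_apply] at hs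
  have hCC : star C * C = 1 := by simp [C]
  rw [hCC, Matrix.mul_one, this]
  exact hs.symm

section RaoAux
namespace RaoAux

/-- selector matrix for an index map -/
def sel {n m : Type*} [Fintype n] [Fintype m] [DecidableEq n] [DecidableEq m]
    (f : m → n) : Matrix n m ℂ :=
  Matrix.of fun i j => if i = f j then 1 else 0

variable {n m p μ : Type*} [Fintype n] [Fintype m] [Fintype p] [Fintype μ]
  [DecidableEq n] [DecidableEq m] [DecidableEq p] [DecidableEq μ]

set_option linter.unusedSectionVars false

lemma selT_mul (f : m → n) (A : Matrix n p ℂ) :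
    (sel f)ᴴ * A = A.submatrix f id := by
  ext j k
  simp [sel, Matrix.mul_apply, Matrix.conjTranspose_apply, apply_ite (starRingEnd ℂ)]

lemma mul_sel (f : m → n) (A : Matrix p n ℂ) :
    A * sel f = A.submatrix id f := by
  ext k j
  simp [sel, Matrix.mul_apply, eq_comm]

lemma selT_mul_sel (f : m → n) (g : p → n) :
    (sel f)ᴴ * sel g = Matrix.of fun j k => if f j = g k then 1 else 0 := by
  rw [selT_mul]
  ext j k
  simp [sel, Matrix.submatrix_apply]

lemma selT_mul_sel_self {f : m → n} (hf : Function.Injective f) :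
    (sel f)ᴴ * sel f = 1 := by
  rw [selT_mul_sel]
  ext j k
  simp [Matrix.one_apply, hf.eq_iff]

lemma sel_elim (f : m → n) (g : p → n) :
    sel (Sum.elim f g) = fromCols (sel f) (sel g) := by
  ext i j
  rcases j with j | j <;> simp [sel, fromCols] <;> congr

lemma sel_mul_selT_of_equiv (e : m ≃ n) :
    sel (⇑e) * (sel (⇑e))ᴴ = 1 := by
  ext i i'
  rw [Matrix.mul_apply]
  rw [Finset.sum_eq_single (e.symm i)]
  · simp [sel, Matrix.conjTranspose_apply, Matrix.one_apply, apply_ite (starRingEnd ℂ),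
      Equiv.eq_symm_apply, eq_comm]
  · intro j _ hj
    simp only [sel, Matrix.conjTranspose_apply, Matrix.of_apply]
    rw [if_neg]
    · simp
    · intro h; exact hj (by rw [h]; simp)
  · simp

lemma sel_partition {f : m → n} {g : p → n} (e : m ⊕ p ≃ n) (he : ⇑e = Sum.elim f g) :
    sel f * (sel f)ᴴ + sel g * (sel g)ᴴ = 1 := by
  have h := sel_mul_selT_of_equiv e
  rw [he, sel_elim, conjTranspose_fromCols_eq_fromRows_conjTranspose,
    fromCols_mul_fromRows] at h
  exact h

/-- positive scalar multiple of a PosDef matrix is PosDef -/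
lemma posDef_smul {c : ℂ} (hc : 0 < c) {A : Matrix n n ℂ} (hA : A.PosDef) :
    (c • A).PosDef := by
  have hcs : star c = c := (IsSelfAdjoint.of_nonneg hc.le)
  exact hA.smul hc

/-- `Eᴴ S E` is PosDef when `S` is and `E` has a left inverse `Eᴴ`. -/
lemma posDef_conj {S : Matrix n n ℂ} (hS : S.PosDef) (E : Matrix n m ℂ)
    (hE : Eᴴ * E = 1) : (Eᴴ * S * E).PosDef := by
  refine hS.conjTranspose_mul_mul_same ?_
  intro x y hxy
  have := congrArg (Eᴴ *ᵥ ·) hxy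
  simpa [Matrix.mulVec_mulVec, hE] using this

/-- key block-projection identity -/
lemma proj_block {S : Matrix n n ℂ} (hS : S.PosDef)
    {E1 : Matrix n m ℂ} {E2 : Matrix n p ℂ}
    (hD : (E1ᴴ * S⁻¹ * E1).PosDef) (hS2 : (E2ᴴ * S * E2).PosDef)
    (h12 : E1ᴴ * E2 = 0)
    (hsum : E1 * E1ᴴ + E2 * E2ᴴ = 1) :
    S⁻¹ - S⁻¹ * E1 * (E1ᴴ * S⁻¹ * E1)⁻¹ * (E1ᴴ * S⁻¹) =
      E2 * (E2ᴴ * S * E2)⁻¹ * E2ᴴ := by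
  set D := E1ᴴ * S⁻¹ * E1 with hDdef
  set Q := S⁻¹ - S⁻¹ * E1 * D⁻¹ * (E1ᴴ * S⁻¹) with hQdef
  set P := E2 * (E2ᴴ * S * E2)⁻¹ * E2ᴴ with hPdef
  have hSdet : IsUnit S.det := hS.det_pos.ne'.isUnit
  have hSiS : S⁻¹ * S = 1 := Matrix.nonsing_inv_mul S hSdet
  have hDinv : D⁻¹ * D = 1 := Matrix.nonsing_inv_mul D hD.det_pos.ne'.isUnit
  have hS2inv : (E2ᴴ * S * E2) * (E2ᴴ * S * E2)⁻¹ = 1 :=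
    Matrix.mul_nonsing_inv _ hS2.det_pos.ne'.isUnit
  have hQE1 : Q * E1 = 0 := by
    have : Q * E1 = S⁻¹ * E1 - S⁻¹ * E1 * (D⁻¹ * D) := by
      rw [hQdef, hDdef]
      simp only [Matrix.sub_mul, Matrix.mul_assoc]
    rw [this, hDinv, Matrix.mul_one, sub_self]
  have hQS : Q * S = 1 - S⁻¹ * E1 * D⁻¹ * E1ᴴ := by
    rw [hQdef]
    simp only [Matrix.sub_mul, Matrix.mul_assoc, hSiS, Matrix.mul_one]
  have hE1P : E1ᴴ * P = 0 := by
    rw [hPdef, ← Matrix.mul_assoc, ← Matrix.mul_assoc, h12, Matrix.zero_mul, Matrix.zero_mul]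
  have hQSP : Q * (S * P) = P := by
    rw [← Matrix.mul_assoc, hQS, Matrix.sub_mul, Matrix.one_mul, Matrix.mul_assoc _ E1ᴴ P,
      hE1P, Matrix.mul_zero, sub_zero]
  have hSP : S * P = E1 * (E1ᴴ * (S * P)) + E2 * E2ᴴ := by
    have h1 : E2ᴴ * (S * P) = E2ᴴ := by
      rw [hPdef, ← Matrix.mul_assoc, ← Matrix.mul_assoc, ← Matrix.mul_assoc]
      calc E2ᴴ * S * E2 * (E2ᴴ * S * E2)⁻¹ * E2ᴴ
          = ((E2ᴴ * S * E2) * (E2ᴴ * S * E2)⁻¹) * E2ᴴ := by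
            simp only [Matrix.mul_assoc]
        _ = E2ᴴ := by rw [hS2inv, Matrix.one_mul]
    calc S * P = 1 * (S * P) := by rw [Matrix.one_mul]
      _ = (E1 * E1ᴴ + E2 * E2ᴴ) * (S * P) := by rw [hsum]
      _ = E1 * (E1ᴴ * (S * P)) + E2 * (E2ᴴ * (S * P)) := by
          simp only [Matrix.add_mul, Matrix.mul_assoc]
      _ = E1 * (E1ᴴ * (S * P)) + E2 * E2ᴴ := by rw [h1]
  have hP : P = Q * (E2 * E2ᴴ) := by
    conv_lhs => rw [← hQSP, hSP]
    rw [Matrix.mul_add, ← Matrix.mul_assoc, hQE1, Matrix.zero_mul, zero_add]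
  have hQ : Q * (E2 * E2ᴴ) = Q := by
    have h2 : E2 * E2ᴴ = 1 - E1 * E1ᴴ := by rw [← hsum]; abel
    rw [h2, Matrix.mul_sub, Matrix.mul_one, ← Matrix.mul_assoc, hQE1, Matrix.zero_mul, sub_zero]
  rw [hP, hQ]

/-- Woodbury-type identity -/
lemma woodbury {S2 : Matrix p p ℂ} (hS2 : S2.PosDef) (Y : Matrix p μ ℂ) :
    Yᴴ * (S2 + Y * Yᴴ)⁻¹ * Y =
      Yᴴ * S2⁻¹ * Y - (Yᴴ * S2⁻¹ * Y) * (1 + Yᴴ * S2⁻¹ * Y)⁻¹ * (Yᴴ * S2⁻¹ * Y) := by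
  set X := Yᴴ * S2⁻¹ * Y with hXdef
  have hXps : X.PosSemidef := by
    have h := hS2.inv.posSemidef.conjTranspose_mul_mul_same Y
    exact hXdef ▸ h
  have h1X : (1 + X).PosDef := Matrix.PosDef.add_posSemidef Matrix.PosDef.one hXps
  have h1Xinv : (1 + X) * (1 + X)⁻¹ = 1 := Matrix.mul_nonsing_inv _ h1X.det_pos.ne'.isUnit
  have hS2i : S2 * S2⁻¹ = 1 := Matrix.mul_nonsing_inv _ hS2.det_pos.ne'.isUnit
  have key : (S2 + Y * Yᴴ) * (S2⁻¹ - S2⁻¹ * Y * (1 + X)⁻¹ * (Yᴴ * S2⁻¹)) = 1 := by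
    have expand : (S2 + Y * Yᴴ) * (S2⁻¹ - S2⁻¹ * Y * (1 + X)⁻¹ * (Yᴴ * S2⁻¹)) =
        1 + Y * (Yᴴ * S2⁻¹) - (Y * ((1 + X) * ((1 + X)⁻¹ * (Yᴴ * S2⁻¹)))) := by
      simp only [Matrix.add_mul, Matrix.mul_sub, Matrix.mul_assoc, hS2i, Matrix.one_mul]
      rw [← Matrix.mul_assoc S2 S2⁻¹, hS2i, Matrix.one_mul]
      simp only [hXdef, Matrix.add_mul, Matrix.one_mul, Matrix.mul_add, Matrix.mul_assoc]
    rw [expand, ← Matrix.mul_assoc (1 + X), h1Xinv, Matrix.one_mul]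
    abel
  have hinv : (S2 + Y * Yᴴ)⁻¹ = S2⁻¹ - S2⁻¹ * Y * (1 + X)⁻¹ * (Yᴴ * S2⁻¹) :=
    Matrix.inv_eq_right_inv key
  rw [hinv]
  simp only [Matrix.mul_sub, Matrix.sub_mul, Matrix.mul_assoc, hXdef]

lemma projPerp_conjTranspose (F : Matrix n m ℂ) : (projPerp F)ᴴ = projPerp F := by
  have h : ((Fᴴ * F)⁻¹)ᴴ = (Fᴴ * F)⁻¹ := by
    rw [Matrix.conjTranspose_nonsing_inv, Matrix.conjTranspose_mul,
      Matrix.conjTranspose_conjTranspose]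
  simp only [projPerp, proj, Matrix.conjTranspose_sub, Matrix.conjTranspose_one,
    Matrix.conjTranspose_mul, Matrix.conjTranspose_conjTranspose, h, Matrix.mul_assoc]

lemma det_sqrt_isUnit {R : Matrix n n ℂ} (hR : R.PosDef) :
    IsUnit (hR.posSemidef.sqrt).det := by
  have h : (hR.posSemidef.sqrt).det * (hR.posSemidef.sqrt).det = R.det := by
    rw [← Matrix.det_mul, hR.posSemidef.sqrt_mul_self]
  exact isUnit_of_mul_isUnit_left (h ▸ hR.det_pos.ne'.isUnit)

lemma sqrt_inv_conjTranspose {R : Matrix n n ℂ} (hR : R.PosDef) :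
    ((hR.posSemidef.sqrt)⁻¹)ᴴ = (hR.posSemidef.sqrt)⁻¹ := by
  rw [Matrix.conjTranspose_nonsing_inv, hR.posSemidef.posSemidef_sqrt.1.eq]

lemma inv_eq_sqrt_inv_mul {R : Matrix n n ℂ} (hR : R.PosDef) :
    R⁻¹ = (hR.posSemidef.sqrt)⁻¹ * (hR.posSemidef.sqrt)⁻¹ := by
  have hd := det_sqrt_isUnit hR
  set W := hR.posSemidef.sqrt with hWdef
  have hWW : W * W = R := hR.posSemidef.sqrt_mul_self
  refine Matrix.inv_eq_right_inv ?_
  rw [← hWW, Matrix.mul_assoc, ← Matrix.mul_assoc W W⁻¹,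
    Matrix.mul_nonsing_inv _ hd, Matrix.one_mul, Matrix.mul_nonsing_inv _ hd]

lemma sqrt_reduction {R : Matrix n n ℂ} (hR : R.PosDef)
    (E1 : Matrix n m ℂ) (Zc : Matrix n μ ℂ) :
    ((hR.posSemidef.sqrt)⁻¹ * Zc)ᴴ * projPerp ((hR.posSemidef.sqrt)⁻¹ * E1) *
        ((hR.posSemidef.sqrt)⁻¹ * Zc) =
      Zcᴴ * (R⁻¹ - R⁻¹ * E1 * (E1ᴴ * R⁻¹ * E1)⁻¹ * (E1ᴴ * R⁻¹)) * Zc := by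
  set W := hR.posSemidef.sqrt with hWdef
  have hWiH : (W⁻¹)ᴴ = W⁻¹ := sqrt_inv_conjTranspose hR
  have hRinv : R⁻¹ = W⁻¹ * W⁻¹ := inv_eq_sqrt_inv_mul hR
  have hinner : ((W⁻¹ * E1)ᴴ * (W⁻¹ * E1)) = E1ᴴ * R⁻¹ * E1 := by
    rw [Matrix.conjTranspose_mul, hWiH, hRinv]
    simp only [Matrix.mul_assoc]
  simp only [projPerp, proj, hinner, hRinv, Matrix.conjTranspose_mul, hWiH,
    Matrix.mul_sub, Matrix.sub_mul, Matrix.mul_one, Matrix.one_mul, Matrix.mul_assoc]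

end RaoAux
end RaoAux

open RaoAux

set_option maxHeartbeats 2000000 in
/-- Eq. (MIS_E3) of the paper (CFARness of the Rao/Durbin test):
`(Z_{W0} V_{c,1})ᴴ P_{Ā₀}^⊥ (Z_{W0} V_{c,1}) = K (X − X (I + X)⁻¹ X)` with
`X = Z₂₃ᴴ S₂⁻¹ Z₂₃`. -/
theorem rao_statistic_mis_identity
    (t r q K M : ℕ) (ht : 0 < t) (hr : 0 < r) (hq : 0 < q) (hK : 0 < K) (hM : 0 < M)
    (hMK : M ≤ K)
    (Sc : Matrix ((Fin t ⊕ Fin r) ⊕ Fin q) ((Fin t ⊕ Fin r) ⊕ Fin q) ℂ) (hS : Sc.PosDef)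
    (Z : Matrix ((Fin t ⊕ Fin r) ⊕ Fin q) (Fin K) ℂ) :
    -- `E_t` : first `t` columns of `I_N`
    let Et : Matrix ((Fin t ⊕ Fin r) ⊕ Fin q) (Fin t) ℂ := fromRows (fromRows 1 0) 0
    let C : Matrix (Fin M) (Fin K) ℂ := Matrix.of fun i j => if (i : ℕ) = (j : ℕ) then 1 else 0
    -- `V_{c,1} = [I_M; 0]`
    let Vc1 : Matrix (Fin K) (Fin M) ℂ := Matrix.of fun i j => if (i : ℕ) = (j : ℕ) then 1 else 0
    let PC : Matrix (Fin K) (Fin K) ℂ := Cᴴ * (C * Cᴴ)⁻¹ * C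
    let Shalf : Matrix ((Fin t ⊕ Fin r) ⊕ Fin q) ((Fin t ⊕ Fin r) ⊕ Fin q) ℂ :=
      hS.posSemidef.sqrt
    let A0 : Matrix ((Fin t ⊕ Fin r) ⊕ Fin q) (Fin t) ℂ := Shalf⁻¹ * Et
    let ZW1 : Matrix ((Fin t ⊕ Fin r) ⊕ Fin q) (Fin K) ℂ := Shalf⁻¹ * Z
    let R0 : Matrix ((Fin t ⊕ Fin r) ⊕ Fin q) ((Fin t ⊕ Fin r) ⊕ Fin q) ℂ :=
      ((K : ℂ))⁻¹ • (Sc + Shalf * projPerp A0 * ZW1 * PC * ZW1ᴴ * projPerp A0 * Shalf)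
    -- embedding of the lower `(r + q)` block of indices
    let g : Fin r ⊕ Fin q → (Fin t ⊕ Fin r) ⊕ Fin q := Sum.elim (Sum.inl ∘ Sum.inr) Sum.inr
    -- row blocks `Z₂₃ = [Z₂; Z₃]` of `Z_c = Z V_{c,1}`
    let Z23 : Matrix (Fin r ⊕ Fin q) (Fin M) ℂ := (Z * Vc1).submatrix g id
    -- lower-right `(r+q) × (r+q)` block `S₂` of `S_c`
    let S2 : Matrix (Fin r ⊕ Fin q) (Fin r ⊕ Fin q) ℂ := Sc.submatrix g g
    let X : Matrix (Fin M) (Fin M) ℂ := Z23ᴴ * S2⁻¹ * Z23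
    ∃ h0 : R0.PosDef,
      ((h0.posSemidef.sqrt)⁻¹ * Z * Vc1)ᴴ * projPerp ((h0.posSemidef.sqrt)⁻¹ * Et) *
          ((h0.posSemidef.sqrt)⁻¹ * Z * Vc1) =
        (K : ℂ) • (X - X * (1 + X)⁻¹ * X) := by
  intro Et C Vc1 PC Shalf A0 ZW1 R0 g Z23 S2 X
  have hEt_def : Et = fromRows (fromRows 1 0) 0 := rfl
  have hC_def : C = (Matrix.of fun i j => if (i : ℕ) = (j : ℕ) then 1 else 0 :
      Matrix (Fin M) (Fin K) ℂ) := rfl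
  have hV_def : Vc1 = (Matrix.of fun i j => if (i : ℕ) = (j : ℕ) then 1 else 0 :
      Matrix (Fin K) (Fin M) ℂ) := rfl
  have hPC_def : PC = Cᴴ * (C * Cᴴ)⁻¹ * C := rfl
  have hA0_def : A0 = Shalf⁻¹ * Et := rfl
  have hZW1_def : ZW1 = Shalf⁻¹ * Z := rfl
  have hR0_def : R0 =
      ((K : ℂ))⁻¹ • (Sc + Shalf * projPerp A0 * ZW1 * PC * ZW1ᴴ * projPerp A0 * Shalf) := rfl
  have hg_def : g = Sum.elim (Sum.inl ∘ Sum.inr) Sum.inr := rfl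
  have hZ23_def : Z23 = (Z * Vc1).submatrix g id := rfl
  have hS2_def : S2 = Sc.submatrix g g := rfl
  have hX_def : X = Z23ᴴ * S2⁻¹ * Z23 := rfl
  -- the selector maps
  set f : Fin t → (Fin t ⊕ Fin r) ⊕ Fin q := fun a => Sum.inl (Sum.inl a) with hf_def
  have hfinj : Function.Injective f := by
    intro a b h
    simpa [hf_def] using h
  have hginj : Function.Injective g := by
    intro a b h
    rw [hg_def] at h
    rcases a with a | a <;> rcases b with b | b <;> simp_all
  have h11 : (sel f)ᴴ * sel f = 1 := selT_mul_sel_self hfinj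
  have h22 : (sel g)ᴴ * sel g = 1 := selT_mul_sel_self hginj
  have h12 : (sel f)ᴴ * sel g = 0 := by
    rw [selT_mul_sel]
    ext j k
    rcases k with k | k <;> simp [hf_def, hg_def]
  have hsum : sel f * (sel f)ᴴ + sel g * (sel g)ᴴ = 1 := by
    refine sel_partition ((Equiv.sumAssoc (Fin t) (Fin r) (Fin q)).symm) ?_
    funext x
    rcases x with a | (b | c) <;> simp [hf_def, hg_def]
  have hEt : Et = sel f := by
    rw [hEt_def]
    ext i j
    rcases i with (i | i) | i <;>
      simp [sel, hf_def, Matrix.one_apply]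
  -- C / Vc1 facts
  have hCH : Cᴴ = Vc1 := by
    rw [hC_def, hV_def]
    ext i j
    simp only [Matrix.conjTranspose_apply, Matrix.of_apply, apply_ite (star : ℂ → ℂ),
      star_one, star_zero]
    rcases eq_or_ne (j : ℕ) (i : ℕ) with h | h
    · rw [if_pos h, if_pos h.symm]
    · rw [if_neg h, if_neg (fun hh => h hh.symm)]
  have hCC : C * Cᴴ = 1 := by
    rw [hC_def]
    ext i j
    rw [Matrix.mul_apply, Finset.sum_eq_single (Fin.castLE hMK i)]
    · rcases eq_or_ne i j with hij | hij
      · subst hij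
        simp [Matrix.one_apply, apply_ite (star : ℂ → ℂ)]
      · have h3 : ¬ ((j:ℕ) = (i:ℕ)) := fun h => hij ((Fin.val_eq_val i j).mp h.symm)
        simp [Matrix.one_apply, hij, h3, apply_ite (star : ℂ → ℂ)]
    · intro b _ hb
      have h1 : ¬ ((i:ℕ) = (b:ℕ)) := by
        intro h; exact hb (Fin.ext (by simp [← h])).symm
      simp [h1]
    · simp
  have hPC : PC = Vc1 * Vc1ᴴ := by
    rw [hPC_def, hCC, inv_one, Matrix.mul_one, ← hCH, Matrix.conjTranspose_conjTranspose]
  -- Shalf facts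
  have hShH : Shalfᴴ = Shalf := hS.posSemidef.posSemidef_sqrt.1
  have hdetSh : IsUnit Shalf.det := det_sqrt_isUnit hS
  have hShiH : (Shalf⁻¹)ᴴ = Shalf⁻¹ := sqrt_inv_conjTranspose hS
  have hScinv : Sc⁻¹ = Shalf⁻¹ * Shalf⁻¹ := inv_eq_sqrt_inv_mul hS
  have hShinv : Shalf * Shalf⁻¹ = 1 := Matrix.mul_nonsing_inv _ hdetSh
  have hShinv' : Shalf⁻¹ * Shalf = 1 := Matrix.nonsing_inv_mul _ hdetSh
  -- the matrix B = Shalf * projPerp A0 * Shalf⁻¹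
  have hB : Shalf * projPerp A0 * Shalf⁻¹ =
      1 - Et * ((Etᴴ * Sc⁻¹ * Et)⁻¹ * (Etᴴ * (Shalf⁻¹ * Shalf⁻¹))) := by
    have hA0H : A0ᴴ = Etᴴ * Shalf⁻¹ := by
      rw [hA0_def, Matrix.conjTranspose_mul, hShiH]
    have hin : A0ᴴ * A0 = Etᴴ * Sc⁻¹ * Et := by
      rw [hA0H, hA0_def, hScinv]
      simp only [Matrix.mul_assoc]
    simp only [projPerp, proj, hin, hA0H, hA0_def,
      Matrix.mul_sub, Matrix.sub_mul, Matrix.mul_one, Matrix.one_mul, Matrix.mul_assoc,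
      hShinv]
    rw [← Matrix.mul_assoc Shalf Shalf⁻¹, hShinv, Matrix.one_mul, hScinv]
    simp only [Matrix.mul_assoc]
    rw [← hA0_def, hin, hA0H, hScinv]
    simp only [hA0_def, Matrix.mul_assoc]
  -- E2ᴴ * B = E2ᴴ
  have hgf : (sel g)ᴴ * sel f = 0 := by
    have h := congrArg Matrix.conjTranspose h12
    simpa [Matrix.conjTranspose_mul] using h
  have hE2B : (sel g)ᴴ * (Shalf * projPerp A0 * Shalf⁻¹) = (sel g)ᴴ := by
    rw [hB, Matrix.mul_sub, Matrix.mul_one, ← Matrix.mul_assoc, hEt, hgf,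
      Matrix.zero_mul, sub_zero]
  -- U := Shalf * projPerp A0 * ZW1 * Vc1
  set U : Matrix ((Fin t ⊕ Fin r) ⊕ Fin q) (Fin M) ℂ :=
    Shalf * projPerp A0 * ZW1 * Vc1 with hU_def
  have hU2 : U = (Shalf * projPerp A0 * Shalf⁻¹) * (Z * Vc1) := by
    rw [hU_def, hZW1_def]
    simp only [Matrix.mul_assoc]
  have hE2U : (sel g)ᴴ * U = Z23 := by
    rw [hU2, ← Matrix.mul_assoc, hE2B, selT_mul, hZ23_def]
  -- R0 = K⁻¹ • (Sc + U Uᴴ)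
  have hPerpH : (projPerp A0)ᴴ = projPerp A0 := projPerp_conjTranspose A0
  have hR0U : R0 = ((K : ℂ))⁻¹ • (Sc + U * Uᴴ) := by
    rw [hR0_def, hPC]
    congr 2
    rw [hU_def]
    simp only [Matrix.conjTranspose_mul, hPerpH, hShH, Matrix.mul_assoc]
  -- R0 is PosDef
  have hKC : (0 : ℂ) < (K : ℂ) := by exact_mod_cast hK
  have hKpos : (0 : ℂ) < ((K : ℂ))⁻¹ := RCLike.inv_pos_of_pos hKC
  have hSU : (Sc + U * Uᴴ).PosDef :=
    hS.add_posSemidef (Matrix.posSemidef_self_mul_conjTranspose U)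
  have h0 : R0.PosDef := hR0U ▸ posDef_smul hKpos hSU
  refine ⟨h0, ?_⟩
  -- reduce the LHS
  rw [show (h0.posSemidef.sqrt)⁻¹ * Z * Vc1 = (h0.posSemidef.sqrt)⁻¹ * (Z * Vc1) from
    Matrix.mul_assoc _ _ _]
  rw [sqrt_reduction h0 Et (Z * Vc1)]
  -- apply the block-projection identity to R0
  have hD' : ((sel f)ᴴ * R0⁻¹ * sel f).PosDef := posDef_conj h0.inv (sel f) h11
  have hS2R : ((sel g)ᴴ * R0 * sel g).PosDef := posDef_conj h0 (sel g) h22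
  have hpb := proj_block h0 hD' hS2R h12 hsum
  rw [hEt, hpb]
  -- reassociate to Z23ᴴ * T0⁻¹ * Z23
  have hZc : (sel g)ᴴ * (Z * Vc1) = Z23 := by rw [selT_mul, hZ23_def]
  have hassoc : (Z * Vc1)ᴴ * (sel g * ((sel g)ᴴ * R0 * sel g)⁻¹ * (sel g)ᴴ) * (Z * Vc1) =
      Z23ᴴ * ((sel g)ᴴ * R0 * sel g)⁻¹ * Z23 := by
    rw [← hZc]
    simp only [Matrix.conjTranspose_mul, Matrix.conjTranspose_conjTranspose, Matrix.mul_assoc]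
  rw [hassoc]
  -- compute T0 = (sel g)ᴴ * R0 * sel g
  have hS2sel : (sel g)ᴴ * Sc * sel g = S2 := by
    rw [Matrix.mul_assoc, mul_sel, selT_mul, Matrix.submatrix_submatrix, hS2_def]
    rfl
  have hT0 : (sel g)ᴴ * R0 * sel g = ((K : ℂ))⁻¹ • (S2 + Z23 * Z23ᴴ) := by
    rw [hR0U, Matrix.mul_smul, Matrix.smul_mul]
    congr 1
    rw [Matrix.mul_add, Matrix.add_mul, hS2sel]
    congr 1
    have hUg : Uᴴ * sel g = Z23ᴴ := by
      have h := congrArg Matrix.conjTranspose hE2U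
      simpa [Matrix.conjTranspose_mul] using h
    rw [← Matrix.mul_assoc, hE2U, Matrix.mul_assoc, hUg]
  rw [hT0]
  -- S2 is PosDef
  have hS2pd : S2.PosDef := hS2sel ▸ posDef_conj hS (sel g) h22
  have hT : (S2 + Z23 * Z23ᴴ).PosDef :=
    hS2pd.add_posSemidef (Matrix.posSemidef_self_mul_conjTranspose Z23)
  have hKne : (K : ℂ) ≠ 0 := hKC.ne'
  have hTinv : (((K : ℂ))⁻¹ • (S2 + Z23 * Z23ᴴ))⁻¹ = (K : ℂ) • (S2 + Z23 * Z23ᴴ)⁻¹ := by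
    refine Matrix.inv_eq_right_inv ?_
    rw [Matrix.smul_mul, Matrix.mul_smul, smul_smul, inv_mul_cancel₀ hKne, one_smul,
      Matrix.mul_nonsing_inv _ hT.det_pos.ne'.isUnit]
  rw [hTinv, Matrix.mul_smul, Matrix.smul_mul]
  congr 1
  have hw := woodbury hS2pd Z23
  rw [hw, hX_def]
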